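/- Let H be a separable infinite-dimensional complex Hilbert space with orthonormal basis (e_n)_{n≥1}, and let A₁, …, A_N be bounded linear operators on H. Then there exists a unitary operator U on H with U e₁ = e₁ such that for every k ∈ {1,…,N} and every n ≥ 1, the matrix of U*A_kU with respect to (e_n) has its n-th row and n-th column supported in the first n(2N+1) entries; that is, ⟨e_n, U*A_kU e_m⟩ = 0 and ⟨e_m, U*A_kU e_n⟩ = 0 whenever m > n(2N+1). -/

import Mathlib

open ContinuousLinearMap Submodule Set

noncomputable section StmtAux

variable {H : Type*} [NormedAddCommGroup H] [InnerProductSpace ℂ H] [CompleteSpace H]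

local notation "⟪" x ", " y "⟫" => @inner ℂ _ _ x y

set_option linter.unusedSectionVars false

lemma my_exists_extend (hH : ¬FiniteDimensional ℂ H) (V : Submodule ℂ H)
    [FiniteDimensional ℂ V] (v : H) :
    ∃ w : H, ‖w‖ = 1 ∧ w ∈ Vᗮ ∧ v ∈ V ⊔ (Submodule.span ℂ {w}) := by
  haveI : CompleteSpace V := FiniteDimensional.complete ℂ V
  set u := v - (orthogonalProjection V v : H) with hu_def
  have hu : u ∈ Vᗮ := by
    have := V.sub_starProjection_mem_orthogonal v; rwa [Submodule.starProjection_apply] at this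
  by_cases h : u = 0
  · have hv : v ∈ V := by
      have : v = (orthogonalProjection V v : H) := by
        rw [← sub_eq_zero]; exact h
      rw [this]; exact (orthogonalProjection V v).2
    have hVne : Vᗮ ≠ ⊥ := by
      intro hbot
      apply hH
      have hVtop : V = ⊤ := Submodule.orthogonal_eq_bot_iff.mp hbot
      have : FiniteDimensional ℂ (⊤ : Submodule ℂ H) := hVtop ▸ ‹_›
      exact (Submodule.topEquiv (R := ℂ) (M := H)).finiteDimensional
    obtain ⟨x, hxV, hx0⟩ := Submodule.ne_bot_iff _ |>.mp hVne
    refine ⟨‖x‖⁻¹ • x, ?_, Vᗮ.smul_mem _ hxV, Submodule.mem_sup_left hv⟩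
    rw [norm_smul, norm_inv, norm_norm, inv_mul_cancel₀ (norm_ne_zero_iff.mpr hx0)]
  · have hc : (‖u‖ : ℂ) ≠ 0 := by
      exact_mod_cast norm_ne_zero_iff.mpr h
    refine ⟨(‖u‖ : ℂ)⁻¹ • u, ?_, Vᗮ.smul_mem _ hu, ?_⟩
    · rw [norm_smul, norm_inv]
      simp [norm_ne_zero_iff.mpr h]
    · have hv : v = (orthogonalProjection V v : H) + (‖u‖ : ℂ) • ((‖u‖ : ℂ)⁻¹ • u) := by
        rw [smul_smul, mul_inv_cancel₀ hc, one_smul]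
        simp [hu_def]
      rw [hv]
      exact Submodule.add_mem_sup (orthogonalProjection V v).2
        (Submodule.smul_mem _ _ (Submodule.mem_span_singleton_self _))

/-- the chosen extension vector -/
noncomputable def extVec (hH : ¬FiniteDimensional ℂ H) {t : ℕ} (g : Fin t → H) (v : H) : H :=
  haveI : FiniteDimensional ℂ (Submodule.span ℂ (Set.range g)) :=
    FiniteDimensional.span_of_finite ℂ (Set.finite_range g)
  Classical.choose (my_exists_extend hH (Submodule.span ℂ (Set.range g)) v)

lemma extVec_spec (hH : ¬FiniteDimensional ℂ H) {t : ℕ} (g : Fin t → H) (v : H) :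
    ‖extVec hH g v‖ = 1 ∧ extVec hH g v ∈ (Submodule.span ℂ (Set.range g))ᗮ ∧
      v ∈ Submodule.span ℂ (Set.range g) ⊔ (Submodule.span ℂ {extVec hH g v}) :=
  haveI : FiniteDimensional ℂ (Submodule.span ℂ (Set.range g)) :=
    FiniteDimensional.span_of_finite ℂ (Set.finite_range g)
  Classical.choose_spec (my_exists_extend hH (Submodule.span ℂ (Set.range g)) v)

/-- the target vector for step `t+1` given value `fj` of the sequence at `j = t / (2N+1)` -/
noncomputable def targetF (e : HilbertBasis ℕ+ ℂ H) {N : ℕ} (A : Fin N → H →L[ℂ] H)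
    (r j : ℕ) (fj : H) : H :=
  if h : r < N then A ⟨r, h⟩ fj
  else if h2 : r < 2 * N then adjoint (A ⟨r - N, by omega⟩) fj
  else e ⟨j + 2, by omega⟩

noncomputable def seqF (hH : ¬FiniteDimensional ℂ H) (e : HilbertBasis ℕ+ ℂ H) {N : ℕ}
    (A : Fin N → H →L[ℂ] H) : ℕ → H
  | 0 => e 1
  | t + 1 =>
      extVec hH (fun s : Fin (t + 1) => seqF hH e A s)
        (targetF e A (t % (2 * N + 1)) (t / (2 * N + 1)) (seqF hH e A (t / (2 * N + 1))))
  decreasing_by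
  · exact s.isLt
  · exact Nat.lt_succ_of_le (Nat.div_le_self _ _)

variable (hH : ¬FiniteDimensional ℂ H) (e : HilbertBasis ℕ+ ℂ H) {N : ℕ}
  (A : Fin N → H →L[ℂ] H)

lemma seqF_succ (t : ℕ) :
    seqF hH e A (t + 1) =
      extVec hH (fun s : Fin (t + 1) => seqF hH e A s)
        (targetF e A (t % (2 * N + 1)) (t / (2 * N + 1)) (seqF hH e A (t / (2 * N + 1)))) := by
  rw [seqF]

/-- span of the first `M` vectors of the sequence -/
noncomputable def spanF (M : ℕ) : Submodule ℂ H :=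
  Submodule.span ℂ (Set.range (fun s : Fin M => seqF hH e A s))

lemma spanF_mono {M M' : ℕ} (h : M ≤ M') : spanF hH e A M ≤ spanF hH e A M' := by
  apply Submodule.span_mono
  rintro x ⟨s, rfl⟩
  exact ⟨⟨s, lt_of_lt_of_le s.2 h⟩, rfl⟩

lemma spanF_le_span (M : ℕ) :
    spanF hH e A M ≤ Submodule.span ℂ (Set.range (seqF hH e A)) := by
  apply Submodule.span_mono
  rintro x ⟨s, rfl⟩
  exact ⟨s, rfl⟩

lemma seqF_mem_spanF {s M : ℕ} (h : s < M) : seqF hH e A s ∈ spanF hH e A M :=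
  Submodule.subset_span ⟨⟨s, h⟩, rfl⟩

lemma hf0 : seqF hH e A 0 = e 1 := by rw [seqF]

lemma seqF_norm (t : ℕ) : ‖seqF hH e A t‖ = 1 := by
  cases t with
  | zero => rw [hf0 hH e A]; exact e.orthonormal.1 1
  | succ t => rw [seqF_succ]; exact (extVec_spec hH _ _).1

lemma seqF_inner_lt {s t : ℕ} (h : s < t) : ⟪seqF hH e A s, seqF hH e A t⟫ = 0 := by
  cases t with
  | zero => omega
  | succ t =>
      have hmem : seqF hH e A (t + 1) ∈
          (Submodule.span ℂ (Set.range (fun s : Fin (t + 1) => seqF hH e A s)))ᗮ := by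
        rw [seqF_succ]; exact (extVec_spec hH _ _).2.1
      have hs : seqF hH e A s ∈
          Submodule.span ℂ (Set.range (fun s : Fin (t + 1) => seqF hH e A s)) :=
        Submodule.subset_span ⟨⟨s, h⟩, rfl⟩
      exact inner_right_of_mem_orthogonal hs hmem

lemma seqF_orthonormal : Orthonormal ℂ (seqF hH e A) := by
  refine ⟨seqF_norm hH e A, fun s t hst => ?_⟩
  rcases lt_or_gt_of_ne hst with h | h
  · exact seqF_inner_lt hH e A h
  · exact inner_eq_zero_symm.mpr (seqF_inner_lt hH e A h)

lemma seqF_orth_spanF {M m : ℕ} (h : M ≤ m) :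
    seqF hH e A m ∈ (spanF hH e A M)ᗮ := by
  rw [Submodule.mem_orthogonal]
  intro u hu
  induction hu using Submodule.span_induction with
  | mem x hx =>
      obtain ⟨s, rfl⟩ := hx
      exact seqF_inner_lt hH e A (lt_of_lt_of_le s.2 h)
  | zero => exact inner_zero_left _
  | add x y _ _ hx hy => rw [inner_add_left, hx, hy, add_zero]
  | smul c x _ hx => rw [inner_smul_left, hx, mul_zero]

lemma targetF_mem (t : ℕ) :
    targetF e A (t % (2 * N + 1)) (t / (2 * N + 1)) (seqF hH e A (t / (2 * N + 1))) ∈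
      spanF hH e A (t + 2) := by
  have hsp := (extVec_spec hH (fun s : Fin (t + 1) => seqF hH e A s)
    (targetF e A (t % (2 * N + 1)) (t / (2 * N + 1)) (seqF hH e A (t / (2 * N + 1))))).2.2
  have h1 : Submodule.span ℂ (Set.range (fun s : Fin (t + 1) => seqF hH e A s)) ≤
      spanF hH e A (t + 2) := by
    apply Submodule.span_mono
    rintro x ⟨s, rfl⟩
    exact ⟨⟨s, by omega⟩, rfl⟩
  have h2 : Submodule.span ℂ
      {extVec hH (fun s : Fin (t + 1) => seqF hH e A s)
        (targetF e A (t % (2 * N + 1)) (t / (2 * N + 1)) (seqF hH e A (t / (2 * N + 1))))} ≤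
      spanF hH e A (t + 2) := by
    rw [Submodule.span_le, Set.singleton_subset_iff, ← seqF_succ]
    exact seqF_mem_spanF hH e A (by omega)
  exact (sup_le h1 h2) hsp

lemma div_mod_aux (j c N : ℕ) (hc : c < 2 * N + 1) :
    (j * (2 * N + 1) + c) % (2 * N + 1) = c ∧ (j * (2 * N + 1) + c) / (2 * N + 1) = j := by
  constructor
  · rw [mul_comm, Nat.mul_add_mod, Nat.mod_eq_of_lt hc]
  · rw [mul_comm, Nat.mul_add_div (by omega), Nat.div_eq_of_lt hc, add_zero]

lemma seqF_A_mem (k : Fin N) (j : ℕ) :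
    A k (seqF hH e A j) ∈ spanF hH e A ((j + 1) * (2 * N + 1)) := by
  obtain ⟨hmod, hdiv⟩ := div_mod_aux j (k : ℕ) N (by omega)
  have hmem := targetF_mem hH e A (j * (2 * N + 1) + (k : ℕ))
  rw [hmod, hdiv] at hmem
  unfold targetF at hmem
  rw [dif_pos k.2, Fin.eta] at hmem
  refine spanF_mono hH e A ?_ hmem
  rw [add_one_mul]
  have := k.2; omega

lemma seqF_adjA_mem (k : Fin N) (j : ℕ) :
    adjoint (A k) (seqF hH e A j) ∈ spanF hH e A ((j + 1) * (2 * N + 1)) := by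
  obtain ⟨hmod, hdiv⟩ := div_mod_aux j (N + (k : ℕ)) N (by have := k.2; omega)
  have hmem := targetF_mem hH e A (j * (2 * N + 1) + (N + (k : ℕ)))
  rw [hmod, hdiv] at hmem
  unfold targetF at hmem
  rw [dif_neg (by omega), dif_pos (by have := k.2; omega)] at hmem
  have hk : (⟨N + (k : ℕ) - N, by have := k.2; omega⟩ : Fin N) = k := by
    ext; simp
  rw [hk] at hmem
  refine spanF_mono hH e A ?_ hmem
  rw [add_one_mul]
  have := k.2; omega

lemma seqF_e_mem (n : ℕ+) : (e n : H) ∈ Submodule.span ℂ (Set.range (seqF hH e A)) := by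
  rcases Nat.lt_or_ge (n : ℕ) 2 with h | h
  · have hn : n = 1 := PNat.coe_injective (le_antisymm (Nat.lt_succ_iff.mp h) n.2)
    subst hn
    rw [← hf0 hH e A]
    exact Submodule.subset_span ⟨0, rfl⟩
  · obtain ⟨j, hj⟩ : ∃ j : ℕ, (n : ℕ) = j + 2 := ⟨(n : ℕ) - 2, by omega⟩
    obtain ⟨hmod, hdiv⟩ := div_mod_aux j (2 * N) N (by omega)
    have hmem := targetF_mem hH e A (j * (2 * N + 1) + 2 * N)
    rw [hmod, hdiv] at hmem
    unfold targetF at hmem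
    rw [dif_neg (by omega), dif_neg (by omega)] at hmem
    have hn : (⟨j + 2, by omega⟩ : ℕ+) = n := by
      apply PNat.coe_injective
      show j + 2 = (n : ℕ)
      exact hj.symm
    rw [hn] at hmem
    exact spanF_le_span hH e A _ hmem

end StmtAux

open ContinuousLinearMap

theorem stmt_2 {H : Type*} [NormedAddCommGroup H] [InnerProductSpace ℂ H] [CompleteSpace H]
    (e : HilbertBasis ℕ+ ℂ H) (N : ℕ) (A : Fin N → H →L[ℂ] H) :
    ∃ U : H →L[ℂ] H, U ∈ unitary (H →L[ℂ] H) ∧ U (e 1) = e 1 ∧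
      ∀ k : Fin N, ∀ n m : ℕ+, (n : ℕ) * (2 * N + 1) < (m : ℕ) →
        inner ℂ (e n) ((adjoint U ∘L A k ∘L U) (e m)) = (0 : ℂ) ∧
        inner ℂ (e m) ((adjoint U ∘L A k ∘L U) (e n)) = (0 : ℂ) := by
  classical
  have hH : ¬FiniteDimensional ℂ H := by
    intro hfin
    exact Module.Finite.not_linearIndependent_of_infinite (fun n : ℕ+ => e n)
      e.orthonormal.linearIndependent
  set f : ℕ → H := seqF hH e A with hf
  -- the re-indexed sequence
  set f' : ℕ+ → H := fun n => f ((n : ℕ) - 1) with hf'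
  have hinj : Function.Injective (fun n : ℕ+ => (n : ℕ) - 1) := by
    intro a b hab
    have hab' : (a : ℕ) - 1 = (b : ℕ) - 1 := hab
    have ha' : (a : ℕ) - 1 + 1 = (a : ℕ) := Nat.succ_pred_eq_of_pos a.2
    have hb' : (b : ℕ) - 1 + 1 = (b : ℕ) := Nat.succ_pred_eq_of_pos b.2
    apply PNat.coe_injective
    omega
  have hon' : Orthonormal ℂ f' := (seqF_orthonormal hH e A).comp _ hinj
  have hrange : Set.range f' = Set.range f := by
    ext x
    constructor
    · rintro ⟨n, rfl⟩; exact ⟨(n : ℕ) - 1, rfl⟩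
    · rintro ⟨m, rfl⟩
      refine ⟨⟨m + 1, by omega⟩, ?_⟩
      simp [hf']
  have hsp : ⊤ ≤ (Submodule.span ℂ (Set.range f')).topologicalClosure := by
    rw [hrange]
    have h1 : Submodule.span ℂ (Set.range (e : ℕ+ → H)) ≤ Submodule.span ℂ (Set.range f) := by
      rw [Submodule.span_le]
      rintro x ⟨n, rfl⟩
      exact seqF_e_mem hH e A n
    calc (⊤ : Submodule ℂ H) = (Submodule.span ℂ (Set.range (e : ℕ+ → H))).topologicalClosure :=
          e.dense_span.symm
      _ ≤ (Submodule.span ℂ (Set.range f)).topologicalClosure :=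
          Submodule.topologicalClosure_mono h1
  set F : HilbertBasis ℕ+ ℂ H := HilbertBasis.mk hon' hsp with hF
  set U' : H ≃ₗᵢ[ℂ] H := e.repr.trans F.repr.symm with hU'
  refine ⟨(U' : H →L[ℂ] H), ?_, ?_, ?_⟩
  · exact ((Unitary.linearIsometryEquiv (𝕜 := ℂ)).symm U').2
  · have : (U' : H →L[ℂ] H) (e 1) = f' 1 := by
      show U' (e 1) = f' 1
      rw [hU', LinearIsometryEquiv.trans_apply, e.repr_self, F.repr_symm_single]
      exact congrFun (HilbertBasis.coe_mk hon' hsp) 1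
    rw [this]
    show f 0 = e 1
    exact hf0 hH e A
  · intro k n m hnm
    have hUe : ∀ p : ℕ+, (U' : H →L[ℂ] H) (e p) = f' p := by
      intro p
      show U' (e p) = f' p
      rw [hU', LinearIsometryEquiv.trans_apply, e.repr_self, F.repr_symm_single]
      exact congrFun (HilbertBasis.coe_mk hon' hsp) p
    have hadj : ∀ x y : H,
        (inner ℂ x ((adjoint (U' : H →L[ℂ] H) ∘L A k ∘L (U' : H →L[ℂ] H)) y) : ℂ) =
        inner ℂ ((U' : H →L[ℂ] H) x) (A k ((U' : H →L[ℂ] H) y)) := by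
      intro x y
      rw [ContinuousLinearMap.comp_apply, ContinuousLinearMap.comp_apply,
        ContinuousLinearMap.adjoint_inner_right]
    have hjn : ((n : ℕ) - 1) + 1 = (n : ℕ) := Nat.succ_pred_eq_of_pos n.2
    have hfn : f' n = f ((n : ℕ) - 1) := rfl
    have hfm : f' m = f ((m : ℕ) - 1) := rfl
    have hMm : (n : ℕ) * (2 * N + 1) ≤ (m : ℕ) - 1 := Nat.le_pred_of_lt hnm
    have horth : f ((m : ℕ) - 1) ∈ (spanF hH e A ((n : ℕ) * (2 * N + 1)))ᗮ :=
      seqF_orth_spanF hH e A hMm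
    have hA : A k (f ((n : ℕ) - 1)) ∈ spanF hH e A ((n : ℕ) * (2 * N + 1)) := by
      have := seqF_A_mem hH e A k ((n : ℕ) - 1)
      rwa [hjn] at this
    have hA' : adjoint (A k) (f ((n : ℕ) - 1)) ∈ spanF hH e A ((n : ℕ) * (2 * N + 1)) := by
      have := seqF_adjA_mem hH e A k ((n : ℕ) - 1)
      rwa [hjn] at this
    constructor
    · rw [hadj, hUe, hUe, hfn, hfm]
      rw [← ContinuousLinearMap.adjoint_inner_left]
      exact inner_right_of_mem_orthogonal hA' horth
    · rw [hadj, hUe, hUe, hfn, hfm]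
      exact inner_left_of_mem_orthogonal hA horth
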